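/- Contribution from dependent divisibility events. Let Ψ = (ψ_1, …, ψ_t) : ℤ^d → ℤ^t be a system of affine-linear forms whose linear coefficients are bounded in absolute value by L, and let p be a prime that is not exceptional for Ψ. Then Σ α(p^{a_1}, …, p^{a_t}) ≪_{t,d,L} p^{−2}, where the sum is over all t-tuples (a_1, …, a_t) of non-negative integers with at least two nonzero entries. -/

import Mathlib

open MeasureTheory Finset Filter
open scoped Classical BigOperators

noncomputable section

namespace DivisorCorr

/-- Value of the `i`-th affine-linear form (with linear coefficients `A` and
constant terms `b`) at an integer point `n`. -/
def psiZ {d t : ℕ} (A : Fin t → Fin d → ℤ) (b : Fin t → ℤ) (i : Fin t) (n : Fin d → ℤ) : ℤ :=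
  ∑ j, A i j * n j + b i

/-- Value of the `i`-th affine-linear form at a real point `x`. -/
def psiR {d t : ℕ} (A : Fin t → Fin d → ℤ) (b : Fin t → ℤ) (i : Fin t) (x : Fin d → ℝ) : ℝ :=
  ∑ j, (A i j : ℝ) * x j + (b i : ℝ)

/-- Non-degeneracy conditions for a system of affine-linear forms: no form is constant,
no restriction of the system to a single variable is constant, and no two forms are
rational multiples of each other. -/
def IsSystem {d t : ℕ} (A : Fin t → Fin d → ℤ) (b : Fin t → ℤ) : Prop :=
  (∀ i, ∃ j, A i j ≠ 0) ∧ (∀ j, ∃ i, A i j ≠ 0) ∧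
    ∀ i j : Fin t, i ≠ j →
      ¬∃ q r : ℤ, q ≠ 0 ∧ r ≠ 0 ∧ (∀ k, q * A i k = r * A j k) ∧ q * b i = r * b j

/-- All linear coefficients are bounded in absolute value by `L`. -/
def CoeffBound {d t : ℕ} (A : Fin t → Fin d → ℤ) (L : ℕ) : Prop :=
  ∀ i j, |A i j| ≤ (L : ℤ)

/-- Any two distinct linear parts are linearly independent (over ℚ, equivalently over ℤ). -/
def PairwiseIndep {d t : ℕ} (A : Fin t → Fin d → ℤ) : Prop :=
  ∀ i j : Fin t, i ≠ j → ∀ q r : ℤ, (∀ k, q * A i k + r * A j k = 0) → q = 0 ∧ r = 0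

/-- Local divisor density `α(d₁,…,d_t)`. -/
def alphaD {d t : ℕ} (A : Fin t → Fin d → ℤ) (b : Fin t → ℤ) (D : Fin t → ℕ) : ℝ :=
  (((Fintype.piFinset fun _ : Fin d => Finset.range ((univ : Finset (Fin t)).lcm D)).filter
      fun n => ∀ i, (D i : ℤ) ∣ psiZ A b i fun j => (n j : ℤ)).card : ℝ) /
    ((((univ : Finset (Fin t)).lcm D : ℕ) : ℝ)) ^ d

/-- Local factor `β_p`. -/
def betaP {d t : ℕ} (A : Fin t → Fin d → ℤ) (b : Fin t → ℤ) (p : ℕ) : ℝ :=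
  (1 - (p : ℝ)⁻¹) ^ t * ∑' a : Fin t → ℕ, alphaD A b fun i => p ^ a i

/-- The divisor function of an integer. -/
def tauZ (n : ℤ) : ℕ := n.natAbs.divisors.card

/-- The normalised divisor function `τ̃(n) = (log N)⁻¹ Σ_{d ∣ n} 1`. -/
def tauTilde (N : ℕ) (n : ℤ) : ℝ := (Real.log N)⁻¹ * (tauZ n : ℝ)

/-- The truncated normalised divisor function
`τ̃_γ(n) = (γ log N)⁻¹ Σ_{d ∣ n, d ≤ N^γ} 1`. -/
def tauTildeG (N : ℕ) (γ : ℝ) (n : ℤ) : ℝ :=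
  (γ * Real.log N)⁻¹ * (((n.natAbs.divisors.filter (fun e : ℕ => (e : ℝ) ≤ (N : ℝ) ^ γ)).card : ℕ) : ℝ)

/-- The integer points of `K` (assumed to lie in `[-N,N]^d`). -/
def pts (d N : ℕ) (K : Set (Fin d → ℝ)) : Finset (Fin d → ℤ) :=
  (Fintype.piFinset fun _ : Fin d => Finset.Icc (-(N : ℤ)) (N : ℤ)).filter
    fun n => (fun j => (n j : ℝ)) ∈ K

/-- The integer points of `K` (assumed to lie in the box `∏_j [lo j, hi j]`). -/
def ptsBox {d : ℕ} (lo hi : Fin d → ℤ) (K : Set (Fin d → ℝ)) : Finset (Fin d → ℤ) :=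
  (Fintype.piFinset fun j : Fin d => Finset.Icc (lo j) (hi j)).filter
    fun n => (fun j => (n j : ℝ)) ∈ K

/-- `K ⊆ [-N,N]^d`. -/
def InBox (d N : ℕ) (K : Set (Fin d → ℝ)) : Prop :=
  ∀ x ∈ K, ∀ j, x j ∈ Set.Icc (-(N : ℝ)) (N : ℝ)

/-- `Ψ(K) ⊆ [1,N]^t`. -/
def MapsIn {d t : ℕ} (A : Fin t → Fin d → ℤ) (b : Fin t → ℤ) (N : ℕ)
    (K : Set (Fin d → ℝ)) : Prop :=
  ∀ x ∈ K, ∀ i, psiR A b i x ∈ Set.Icc (1 : ℝ) (N : ℝ)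

/-- Two linear parts are linearly dependent modulo `p`. -/
def AffRelMod {d : ℕ} (p : ℕ) (u v : Fin d → ℤ) : Prop :=
  ∃ q r : ℤ, (¬(p : ℤ) ∣ q ∨ ¬(p : ℤ) ∣ r) ∧ ∀ k, (p : ℤ) ∣ (q * u k + r * v k)

/-- `p` is an exceptional prime for the system with linear coefficients `A`. -/
def Exceptional {d t : ℕ} (A : Fin t → Fin d → ℤ) (p : ℕ) : Prop :=
  ∃ i j : Fin t, i ≠ j ∧ AffRelMod p (A i) (A j)

/-- `S₁`: integers divisible by a proper prime power `p^a > (log N)^{C₁}`. -/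
def S1set (N : ℕ) (C₁ : ℝ) : Set ℤ :=
  {m | ∃ p a : ℕ, p.Prime ∧ 2 ≤ a ∧ Real.log N ^ C₁ < (p : ℝ) ^ a ∧ (p : ℤ) ^ a ∣ m}

/-- The `X`-smooth part `∏_{p^a ∥ n, p ≤ X} p^a` of `n`. -/
def smoothPart (n : ℕ) (X : ℝ) : ℕ :=
  ∏ p ∈ (n.primeFactors.filter (fun p : ℕ => (p : ℝ) ≤ X) : Finset ℕ), p ^ n.factorization p

/-- `S₂`: positive "smooth" integers `m` with
`∏_{p^a ∥ m, p ≤ N^{1/(log log N)³}} p^a ≥ N^{γ / log log N}`. -/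
def S2set (N : ℕ) (γ : ℝ) : Set ℤ :=
  {m | 0 < m ∧ (N : ℝ) ^ (γ / Real.log (Real.log N)) ≤
      (smoothPart m.natAbs ((N : ℝ) ^ ((Real.log (Real.log N)) ^ 3)⁻¹) : ℝ)}

/-- `m₀(i,s) = ⌈γ s (i + 3 - log₂ s)/100⌉`. -/
def mSmall (γ : ℝ) (s i : ℕ) : ℕ := ⌈γ * s * ((i : ℝ) + 3 - Real.logb 2 s) / 100⌉₊

/-- Membership in `U(i,s)`: products of `m₀(i,s)` distinct primes from
`[N^{1/2^{i+1}}, N^{1/2^i}]`. -/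
def inU (N : ℕ) (γ : ℝ) (s i : ℕ) (u : ℕ) : Prop :=
  Squarefree u ∧ u.primeFactors.card = mSmall γ s i ∧
    ∀ p ∈ u.primeFactors,
      (N : ℝ) ^ (((2 : ℝ) ^ (i + 1))⁻¹) ≤ (p : ℝ) ∧ (p : ℝ) ≤ (N : ℝ) ^ (((2 : ℝ) ^ i)⁻¹)

/-- `X(i,s)`: positive integers `n ≤ N` divisible by at least `m₀(i,s)` distinct primes
from `[N^{1/2^{i+1}}, N^{1/2^i}]`. -/
def clusterSet (N : ℕ) (γ : ℝ) (s i : ℕ) : Finset ℕ :=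
  (Finset.Icc 1 N).filter fun n =>
    mSmall γ s i ≤ (n.primeFactors.filter fun p =>
      (N : ℝ) ^ (((2 : ℝ) ^ (i + 1))⁻¹) ≤ (p : ℝ) ∧ (p : ℝ) ≤ (N : ℝ) ^ (((2 : ℝ) ^ i)⁻¹)).card

/-- The triple sum `Σ_{s=2g+1}^{(log log N)³} Σ_{log₂ s - 2 ≤ i ≤ 6 log log log N}
Σ_{u ∈ U(i,s)} 2^s 1_{u ∣ n} tg(n)` appearing in the majorants. -/
def nuTail (N : ℕ) (γ : ℝ) (g : ℕ) (tg : ℤ → ℝ) (n : ℤ) : ℝ :=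
  ∑ s ∈ Finset.Icc (2 * g + 1) ⌊(Real.log (Real.log N)) ^ 3⌋₊,
    ∑ i ∈ Finset.range (⌊6 * Real.log (Real.log (Real.log N))⌋₊ + 1),
      if Real.logb 2 (s : ℝ) - 2 ≤ (i : ℝ) then
        (2 : ℝ) ^ s * (((n.natAbs.divisors.filter (inU N γ s i)).card : ℕ) : ℝ) * tg n
      else 0

/-- The majorant `ν₀` for the normalised divisor function, with `γ = 1/g`. -/
def nu0 (N g : ℕ) (C₁ : ℝ) (n : ℤ) : ℝ :=
  (2 : ℝ) ^ (2 * g) * tauTildeG N (g : ℝ)⁻¹ n +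
    nuTail N (g : ℝ)⁻¹ g (tauTildeG N (g : ℝ)⁻¹) n +
    if n ∈ S1set N C₁ ∪ S2set N (g : ℝ)⁻¹ then tauTilde N n else 0

/-- `w(N) = (1/2) log log N`. -/
def wN (N : ℕ) : ℝ := Real.log (Real.log N) / 2

/-- Primes `p < w(N)`. -/
def smallPrimes (N : ℕ) : Finset ℕ :=
  (Finset.range (⌈wN N⌉₊ + 1)).filter fun p : ℕ => p.Prime ∧ (p : ℝ) < wN N

/-- Primes `p ≤ w(N)`. -/
def smallPrimesLe (N : ℕ) : Finset ℕ :=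
  (Finset.range (⌈wN N⌉₊ + 1)).filter fun p : ℕ => p.Prime ∧ (p : ℝ) ≤ wN N

/-- `W = ∏_{p < w(N)} p`. -/
def Wp (N : ℕ) : ℕ := ∏ p ∈ smallPrimes N, p

/-- `W̃ = ∏_{p ≤ w(N)} p^{⌊C₁ log_p log N⌋}`. -/
def Wt (N : ℕ) (C₁ : ℝ) : ℕ :=
  ∏ p ∈ smallPrimesLe N, p ^ ⌊C₁ * (Real.log (Real.log N) / Real.log p)⌋₊

/-- `ϖ(n)`: the `w(N)`-smooth part of `n`. -/
def varpi (N : ℕ) (n : ℕ) : ℕ :=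
  ∏ p ∈ (n.primeFactors.filter (fun p : ℕ => (p : ℝ) ≤ wN N) : Finset ℕ), p ^ n.factorization p

/-- The `W`-tricked normalised divisor function
`τ̃'(n) = (W/φ(W)) (log N)⁻¹ Σ_{d ∣ n, (d,W)=1} 1`. -/
def tauW (N : ℕ) (n : ℤ) : ℝ :=
  (Wp N : ℝ) / ((Wp N).totient : ℝ) * (Real.log N)⁻¹ *
    (((n.natAbs.divisors.filter (fun e => Nat.Coprime e (Wp N))).card : ℕ) : ℝ)

/-- The truncated `W`-tricked normalised divisor function
`τ̃'_γ(n) = (W/φ(W)) (γ log N)⁻¹ Σ_{d ∣ n, d ≤ N^γ, (d,W)=1} 1`. -/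
def tauWG (N : ℕ) (γ : ℝ) (n : ℤ) : ℝ :=
  (Wp N : ℝ) / ((Wp N).totient : ℝ) * (γ * Real.log N)⁻¹ *
    (((n.natAbs.divisors.filter (fun e : ℕ =>
        (e : ℝ) ≤ (N : ℝ) ^ γ ∧ Nat.Coprime e (Wp N))).card : ℕ) : ℝ)

/-- The truncated `W`-tricked majorant `ν₀'`, with `γ = 1/g`. -/
def nu0' (N g : ℕ) (n : ℤ) : ℝ :=
  (2 : ℝ) ^ (2 * g) * tauWG N (g : ℝ)⁻¹ n + nuTail N (g : ℝ)⁻¹ g (tauWG N (g : ℝ)⁻¹) n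

lemma not_dvd_one_int {p : ℕ} (hp : p.Prime) : ¬ (p:ℤ) ∣ 1 := by
  intro h
  have h1 : p ∣ 1 := by exact_mod_cast h
  exact hp.ne_one (Nat.dvd_one.mp h1)

lemma exists_minor {d : ℕ} {p : ℕ} (hp : p.Prime) {u v : Fin d → ℤ}
    (h : ¬ AffRelMod p u v) :
    ∃ k l, ¬ (p:ℤ) ∣ (u k * v l - u l * v k) := by
  by_contra hc
  push_neg at hc
  apply h
  by_cases hu : ∀ k, (p:ℤ) ∣ u k
  · exact ⟨1, 0, Or.inl (not_dvd_one_int hp), fun k => by simpa using hu k⟩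
  · push_neg at hu
    obtain ⟨k₀, hk₀⟩ := hu
    refine ⟨-v k₀, u k₀, Or.inr hk₀, fun k => ?_⟩
    have h2 := hc k₀ k
    convert h2 using 1
    ring

lemma fiber_card_mul {G H : Type*} [AddCommGroup G] [AddCommGroup H] [Fintype G] [Fintype H]
    [DecidableEq G] [DecidableEq H] (φ : G →+ H) (hs : Function.Surjective φ) (c : H) :
    ((univ : Finset G).filter fun x => φ x = c).card * Fintype.card H = Fintype.card G := by
  have key : ∀ c' : H, ((univ : Finset G).filter fun x => φ x = c').card
      = ((univ : Finset G).filter fun x => φ x = c).card := by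
    intro c'
    obtain ⟨y, hy⟩ := hs (c' - c)
    refine Finset.card_nbij' (fun x => x - y) (fun x => x + y) ?_ ?_ ?_ ?_
    · intro x hx
      simp only [Finset.coe_filter, Set.mem_setOf_eq, Finset.mem_filter, Finset.mem_univ, true_and] at hx ⊢
      rw [map_sub, hx, hy]; abel
    · intro x hx
      simp only [Finset.coe_filter, Set.mem_setOf_eq, Finset.mem_filter, Finset.mem_univ, true_and] at hx ⊢
      rw [map_add, hx, hy]; abel
    · intro x _; simp
    · intro x _; simp
  have h1 : Fintype.card G = ∑ c' : H, ((univ : Finset G).filter fun x => φ x = c').card := by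
    rw [← Finset.card_univ]
    exact Finset.card_eq_sum_card_fiberwise (fun x _ => Finset.mem_univ (φ x))
  rw [h1]
  simp only [key]
  rw [Finset.sum_const, Finset.card_univ, smul_eq_mul, mul_comm]

lemma sum_two_support {R : Type*} [CommRing R] {d : ℕ} (g : Fin d → R) (x : Fin d → R)
    (k l : Fin d) (hkl : k ≠ l) (hx : ∀ j, j ≠ k → j ≠ l → x j = 0) :
    ∑ j, g j * x j = g k * x k + g l * x l := by
  rw [← Finset.sum_subset (Finset.subset_univ ({k, l} : Finset (Fin d)))]
  · rw [Finset.sum_pair hkl]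
  · intro j _ hj
    simp only [Finset.mem_insert, Finset.mem_singleton] at hj
    push_neg at hj
    rw [hx j hj.1 hj.2, mul_zero]


lemma count_two {d : ℕ} {p : ℕ} (hp : p.Prime) (M a c : ℕ) (ha : a ≤ M) (hc : c ≤ M)
    (u v : Fin d → ℤ) (bi bj : ℤ) (k l : Fin d)
    (hkl : ¬ (p:ℤ) ∣ (u k * v l - u l * v k)) :
    (((Fintype.piFinset fun _ : Fin d => Finset.range (p ^ M)).filter fun n : Fin d → ℕ =>
        ((p:ℤ)^a ∣ (∑ j, u j * ((n j : ℕ) : ℤ)) + bi) ∧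
        ((p:ℤ)^c ∣ (∑ j, v j * ((n j : ℕ) : ℤ)) + bj)).card)
      * p ^ (a + c) = (p ^ M) ^ d := by
  haveI : NeZero (p ^ M) := ⟨(pow_pos hp.pos M).ne'⟩
  haveI : NeZero (p ^ a) := ⟨(pow_pos hp.pos a).ne'⟩
  haveI : NeZero (p ^ c) := ⟨(pow_pos hp.pos c).ne'⟩
  have hklne : k ≠ l := by
    rintro rfl
    exact hkl (by simp)
  set m := p ^ M with hmdef
  set ca : ZMod m →+* ZMod (p ^ a) := ZMod.castHom (pow_dvd_pow p ha) _ with hca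
  set cc : ZMod m →+* ZMod (p ^ c) := ZMod.castHom (pow_dvd_pow p hc) _ with hcc
  set F : (Fin d → ZMod m) →+ ZMod (p ^ a) × ZMod (p ^ c) :=
    AddMonoidHom.mk' (fun x => (∑ j, (u j : ZMod (p ^ a)) * ca (x j),
                                ∑ j, (v j : ZMod (p ^ c)) * cc (x j)))
      (by
        intro x y
        simp [Pi.add_apply, map_add, mul_add, Finset.sum_add_distrib, Prod.ext_iff]) with hF
  -- the determinant is a unit
  have hD : IsUnit ((u k * v l - u l * v k : ℤ) : ZMod m) := by
    set D := u k * v l - u l * v k with hDdef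
    have hpD : ¬ p ∣ D.natAbs := fun hdvd => hkl (Int.natCast_dvd.mpr hdvd)
    have hcop : Nat.Coprime D.natAbs m :=
      ((Nat.Prime.coprime_iff_not_dvd hp).mpr hpD).symm.pow_right M
    have hunit : IsUnit ((D.natAbs : ℕ) : ZMod m) := (ZMod.isUnit_iff_coprime _ _).mpr hcop
    rcases Int.natAbs_eq D with h | h
    · rw [h, Int.cast_natCast]; exact hunit
    · rw [h, Int.cast_neg, Int.cast_natCast]; exact hunit.neg
  -- surjectivity of F
  have hFs : Function.Surjective F := by
    rintro ⟨y, z⟩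
    obtain ⟨E, hE⟩ := hD.exists_right_inv
    set y' : ZMod m := ((y.val : ℕ) : ZMod m) with hy'
    set z' : ZMod m := ((z.val : ℕ) : ZMod m) with hz'
    set s : ZMod m := E * ((v l : ZMod m) * y' - (u l : ZMod m) * z') with hs
    set w : ZMod m := E * ((u k : ZMod m) * z' - (v k : ZMod m) * y') with hw
    refine ⟨fun j => if j = k then s else if j = l then w else 0, ?_⟩
    have hxk : (fun j => if j = k then s else if j = l then w else 0) k = s := by simp
    have hxl : (fun j => if j = k then s else if j = l then w else 0) l = w := by
      simp [hklne.symm]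
    have hsum1 : ∑ j, (u j : ZMod (p ^ a)) *
        ca ((fun j => if j = k then s else if j = l then w else 0) j)
        = (u k : ZMod (p ^ a)) * ca s + (u l : ZMod (p ^ a)) * ca w := by
      rw [sum_two_support _ _ k l hklne]
      · rw [hxk, hxl]
      · intro j h1 h2
        simp only [if_neg h1, if_neg h2, map_zero]
    have hsum2 : ∑ j, (v j : ZMod (p ^ c)) *
        cc ((fun j => if j = k then s else if j = l then w else 0) j)
        = (v k : ZMod (p ^ c)) * cc s + (v l : ZMod (p ^ c)) * cc w := by
      rw [sum_two_support _ _ k l hklne]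
      · rw [hxk, hxl]
      · intro j h1 h2
        simp only [if_neg h1, if_neg h2, map_zero]
    have hcay : ca y' = y := by
      rw [hy', map_natCast]
      exact ZMod.natCast_rightInverse y
    have hccz : cc z' = z := by
      rw [hz', map_natCast]
      exact ZMod.natCast_rightInverse z
    have hEa : ((u k * v l - u l * v k : ℤ) : ZMod (p ^ a)) * ca E = 1 := by
      have h' := congrArg ca hE
      rwa [map_mul, map_intCast, map_one] at h'
    have hEc : ((u k * v l - u l * v k : ℤ) : ZMod (p ^ c)) * cc E = 1 := by
      have h' := congrArg cc hE
      rwa [map_mul, map_intCast, map_one] at h'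
    have e1 : (u k : ZMod (p ^ a)) * ca s + (u l : ZMod (p ^ a)) * ca w = y := by
      rw [hs, hw]
      simp only [map_mul, map_sub, map_intCast]
      rw [hcay]
      push_cast at hEa
      linear_combination y * hEa
    have e2 : (v k : ZMod (p ^ c)) * cc s + (v l : ZMod (p ^ c)) * cc w = z := by
      rw [hs, hw]
      simp only [map_mul, map_sub, map_intCast]
      rw [hccz]
      push_cast at hEc
      linear_combination z * hEc
    show (∑ j, (u j : ZMod (p ^ a)) * ca _, ∑ j, (v j : ZMod (p ^ c)) * cc _) = (y, z)
    rw [hsum1, hsum2, e1, e2]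
  -- fiber count
  have hfc := fiber_card_mul F hFs (-(bi : ZMod (p ^ a)), -(bj : ZMod (p ^ c)))
  have hcards : Fintype.card (ZMod (p ^ a) × ZMod (p ^ c)) = p ^ (a + c) := by
    rw [Fintype.card_prod, ZMod.card, ZMod.card, pow_add]
  have hcardG : Fintype.card (Fin d → ZMod m) = m ^ d := by
    rw [Fintype.card_fun, ZMod.card, Fintype.card_fin]
  rw [hcards, hcardG] at hfc
  -- the cast computation
  have hcast1 : ∀ x : Fin d → ZMod m,
      ((((∑ j, u j * ((x j).val : ℤ)) + bi : ℤ)) : ZMod (p ^ a))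
        = ∑ j, (u j : ZMod (p ^ a)) * ca (x j) + (bi : ZMod (p ^ a)) := by
    intro x
    push_cast
    congr 1
    refine Finset.sum_congr rfl fun j _ => ?_
    congr 1
    conv_rhs => rw [← ZMod.natCast_rightInverse (x j)]
    rw [map_natCast]
  have hcast2 : ∀ x : Fin d → ZMod m,
      ((((∑ j, v j * ((x j).val : ℤ)) + bj : ℤ)) : ZMod (p ^ c))
        = ∑ j, (v j : ZMod (p ^ c)) * cc (x j) + (bj : ZMod (p ^ c)) := by
    intro x
    push_cast
    congr 1
    refine Finset.sum_congr rfl fun j _ => ?_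
    congr 1
    conv_rhs => rw [← ZMod.natCast_rightInverse (x j)]
    rw [map_natCast]
  have hdvd1 : ∀ x : Fin d → ZMod m,
      ((p:ℤ)^a ∣ (∑ j, u j * ((x j).val : ℤ)) + bi) ↔
        (∑ j, (u j : ZMod (p ^ a)) * ca (x j)) = -(bi : ZMod (p ^ a)) := by
    intro x
    rw [show ((p:ℤ)^a) = (((p^a : ℕ) : ℤ)) by push_cast; ring,
      ← ZMod.intCast_zmod_eq_zero_iff_dvd, hcast1 x]
    constructor
    · intro h; linear_combination h
    · intro h; linear_combination h
  have hdvd2 : ∀ x : Fin d → ZMod m,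
      ((p:ℤ)^c ∣ (∑ j, v j * ((x j).val : ℤ)) + bj) ↔
        (∑ j, (v j : ZMod (p ^ c)) * cc (x j)) = -(bj : ZMod (p ^ c)) := by
    intro x
    rw [show ((p:ℤ)^c) = (((p^c : ℕ) : ℤ)) by push_cast; ring,
      ← ZMod.intCast_zmod_eq_zero_iff_dvd, hcast2 x]
    constructor
    · intro h; linear_combination h
    · intro h; linear_combination h
  -- bijection between the two filters
  have hbij : (((Fintype.piFinset fun _ : Fin d => Finset.range (p ^ M)).filter
        fun n : Fin d → ℕ =>
        ((p:ℤ)^a ∣ (∑ j, u j * ((n j : ℕ) : ℤ)) + bi) ∧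
        ((p:ℤ)^c ∣ (∑ j, v j * ((n j : ℕ) : ℤ)) + bj)).card)
      = ((univ : Finset (Fin d → ZMod m)).filter fun x =>
          F x = (-(bi : ZMod (p ^ a)), -(bj : ZMod (p ^ c)))).card := by
    refine Finset.card_nbij' (fun n j => ((n j : ℕ) : ZMod m)) (fun x j => (x j).val) ?_ ?_ ?_ ?_
    · intro n hn
      simp only [Finset.coe_filter, Set.mem_setOf_eq, Finset.mem_filter, Fintype.mem_piFinset, Finset.mem_range] at hn
      obtain ⟨hn1, hn2, hn3⟩ := hn
      have hv : ∀ j, (((n j : ℕ) : ZMod m)).val = n j := fun j => ZMod.val_cast_of_lt (hn1 j)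
      simp only [Finset.coe_filter, Set.mem_setOf_eq, Finset.mem_filter, Finset.mem_univ, true_and]
      have e1 := (hdvd1 (fun j => ((n j : ℕ) : ZMod m))).mp (by simpa only [hv] using hn2)
      have e2 := (hdvd2 (fun j => ((n j : ℕ) : ZMod m))).mp (by simpa only [hv] using hn3)
      show (∑ j, (u j : ZMod (p ^ a)) * ca _, ∑ j, (v j : ZMod (p ^ c)) * cc _) = _
      rw [e1, e2]
    · intro x hx
      simp only [Finset.coe_filter, Set.mem_setOf_eq, Finset.mem_filter, Finset.mem_univ, true_and] at hx
      have e1 : (∑ j, (u j : ZMod (p ^ a)) * ca (x j)) = -(bi : ZMod (p ^ a)) :=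
        congrArg Prod.fst hx
      have e2 : (∑ j, (v j : ZMod (p ^ c)) * cc (x j)) = -(bj : ZMod (p ^ c)) :=
        congrArg Prod.snd hx
      simp only [Finset.coe_filter, Set.mem_setOf_eq, Finset.mem_filter, Fintype.mem_piFinset, Finset.mem_range]
      exact ⟨fun j => ZMod.val_lt (x j), (hdvd1 x).mpr e1, (hdvd2 x).mpr e2⟩
    · intro n hn
      simp only [Finset.coe_filter, Set.mem_setOf_eq, Finset.mem_filter, Fintype.mem_piFinset, Finset.mem_range] at hn
      funext j
      exact ZMod.val_cast_of_lt (hn.1 j)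
    · intro x _
      funext j
      exact ZMod.natCast_rightInverse (x j)
  rw [hbij]
  exact hfc


lemma lcm_pow {t : ℕ} (ht : 0 < t) {p : ℕ} (hp : p.Prime) (a : Fin t → ℕ) :
    (univ : Finset (Fin t)).lcm (fun i => p ^ a i) = p ^ ((univ : Finset (Fin t)).sup a) := by
  haveI : Nonempty (Fin t) := Fin.pos_iff_nonempty.mp ht
  apply Nat.dvd_antisymm
  · apply Finset.lcm_dvd
    intro i _
    exact pow_dvd_pow p (Finset.le_sup (Finset.mem_univ i))
  · obtain ⟨i, _, hi⟩ := Finset.exists_mem_eq_sup univ Finset.univ_nonempty a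
    rw [hi]
    exact Finset.dvd_lcm (Finset.mem_univ i)


lemma alphaD_nonneg {d t : ℕ} (A : Fin t → Fin d → ℤ) (b : Fin t → ℤ) (D : Fin t → ℕ) :
    0 ≤ alphaD A b D := by
  unfold alphaD
  positivity

lemma alphaD_le {d t : ℕ} (ht : 0 < t) {p : ℕ} (hp : p.Prime)
    (A : Fin t → Fin d → ℤ) (b : Fin t → ℤ) (a : Fin t → ℕ)
    {i₀ j₀ : Fin t} (hne : i₀ ≠ j₀)
    (hi₀ : ∀ k, a k ≤ a i₀)
    {k l : Fin d} (hkl : ¬ (p:ℤ) ∣ (A i₀ k * A j₀ l - A i₀ l * A j₀ k)) :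
    alphaD A b (fun i => p ^ a i) ≤ ((p:ℝ) ^ (a i₀ + a j₀))⁻¹ := by
  have hsup : (univ : Finset (Fin t)).sup a = a i₀ := by
    apply le_antisymm
    · exact Finset.sup_le fun k _ => hi₀ k
    · exact Finset.le_sup (Finset.mem_univ i₀)
  set M := a i₀ with hM
  have hlcm : (univ : Finset (Fin t)).lcm (fun i => p ^ a i) = p ^ M := by
    rw [lcm_pow ht hp a, hsup]
  have hsub : ((Fintype.piFinset fun _ : Fin d => Finset.range (p ^ M)).filter
      fun n : Fin d → ℕ => ∀ i, ((p ^ a i : ℕ) : ℤ) ∣ psiZ A b i fun j => ((n j : ℕ) : ℤ)) ⊆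
      ((Fintype.piFinset fun _ : Fin d => Finset.range (p ^ M)).filter fun n : Fin d → ℕ =>
        ((p:ℤ)^(a i₀) ∣ (∑ j, A i₀ j * ((n j : ℕ) : ℤ)) + b i₀) ∧
        ((p:ℤ)^(a j₀) ∣ (∑ j, A j₀ j * ((n j : ℕ) : ℤ)) + b j₀)) := by
    intro n hn
    rw [Finset.mem_filter] at hn ⊢
    refine ⟨hn.1, ?_, ?_⟩
    · have := hn.2 i₀
      unfold psiZ at this
      exact_mod_cast this
    · have := hn.2 j₀
      unfold psiZ at this
      exact_mod_cast this
  have hcnt := count_two hp M (a i₀) (a j₀) (le_of_eq hM.symm) (hi₀ j₀)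
    (A i₀) (A j₀) (b i₀) (b j₀) k l hkl
  have hcard := Finset.card_le_card hsub
  -- now the real computation
  unfold alphaD
  rw [hlcm]
  have hpp : (0:ℝ) < (p:ℝ) := by exact_mod_cast hp.pos
  have hm0 : (0:ℝ) < ((p ^ M : ℕ) : ℝ) ^ d := by
    have : (0:ℝ) < ((p ^ M : ℕ) : ℝ) := by exact_mod_cast pow_pos hp.pos M
    positivity
  rw [div_le_iff₀ hm0]
  have hpow0 : (0:ℝ) < (p:ℝ) ^ (a i₀ + a j₀) := pow_pos hpp _
  have hc2 : ((((Fintype.piFinset fun _ : Fin d => Finset.range (p ^ M)).filter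
      fun n : Fin d → ℕ =>
        ((p:ℤ)^(a i₀) ∣ (∑ j, A i₀ j * ((n j : ℕ) : ℤ)) + b i₀) ∧
        ((p:ℤ)^(a j₀) ∣ (∑ j, A j₀ j * ((n j : ℕ) : ℤ)) + b j₀)).card : ℕ) : ℝ)
      * (p:ℝ) ^ (a i₀ + a j₀) = ((p ^ M : ℕ) : ℝ) ^ d := by
    have := congrArg (fun n : ℕ => (n : ℝ)) hcnt
    push_cast at this ⊢
    convert this using 2
  calc ((((Fintype.piFinset fun _ : Fin d => Finset.range (p ^ M)).filter
      fun n => ∀ i, ((p ^ a i : ℕ) : ℤ) ∣ psiZ A b i fun j => ((n j : ℕ) : ℤ)).card : ℕ) : ℝ)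
      ≤ ((((Fintype.piFinset fun _ : Fin d => Finset.range (p ^ M)).filter
      fun n : Fin d → ℕ =>
        ((p:ℤ)^(a i₀) ∣ (∑ j, A i₀ j * ((n j : ℕ) : ℤ)) + b i₀) ∧
        ((p:ℤ)^(a j₀) ∣ (∑ j, A j₀ j * ((n j : ℕ) : ℤ)) + b j₀)).card : ℕ) : ℝ) := by
        exact_mod_cast hcard
    _ = ((p ^ M : ℕ) : ℝ) ^ d * ((p:ℝ) ^ (a i₀ + a j₀))⁻¹ := by
        rw [← hc2]; field_simp
    _ = ((p:ℝ) ^ (a i₀ + a j₀))⁻¹ * ((p ^ M : ℕ) : ℝ) ^ d := by ring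


/-- **Contribution from dependent divisibility events.** For an unexceptional prime `p`,
`Σ_{(a_1,…,a_t), at least two nonzero} α(p^{a_1},…,p^{a_t}) ≪_{t,d,L} p^{-2}`. -/
theorem dependent_divisibility_events (t d L : ℕ) (ht : 0 < t) (hd : 0 < d) (hL : 0 < L) :
    ∃ C : ℝ, 0 < C ∧
      ∀ (A : Fin t → Fin d → ℤ) (b : Fin t → ℤ), IsSystem A b → CoeffBound A L →
      ∀ p : ℕ, p.Prime → ¬Exceptional A p →
        Summable (fun a : Fin t → ℕ =>
          if 2 ≤ ((univ : Finset (Fin t)).filter (fun i => a i ≠ 0)).card then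
            alphaD A b (fun i => p ^ a i) else 0) ∧
        (∑' a : Fin t → ℕ,
            if 2 ≤ ((univ : Finset (Fin t)).filter (fun i => a i ≠ 0)).card then
              alphaD A b (fun i => p ^ a i) else 0) ≤ C / (p : ℝ) ^ 2 := by
  haveI : Nonempty (Fin t) := ⟨⟨0, ht⟩⟩
  have htR : (0:ℝ) < t := by exact_mod_cast ht
  set r : ℝ := (2:ℝ) ^ (-(t:ℝ)⁻¹) with hrdef
  have hr0 : 0 < r := Real.rpow_pos_of_pos two_pos _
  have hr1 : r < 1 :=
    Real.rpow_lt_one_of_one_lt_of_neg one_lt_two (neg_lt_zero.mpr (by positivity))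
  have hr2 : (0:ℝ) < 1 - r := by linarith
  refine ⟨2 * ((1 - r)⁻¹) ^ t, mul_pos two_pos (pow_pos (inv_pos.mpr hr2) t), ?_⟩
  intro A b _hsys _hcb p hp hexc
  have hppos : (0:ℝ) < p := by exact_mod_cast hp.pos
  have hp2 : (2:ℝ) ≤ p := by exact_mod_cast hp.two_le
  have hf0 : ∀ a : Fin t → ℕ,
      0 ≤ (if 2 ≤ ((univ : Finset (Fin t)).filter (fun i => a i ≠ 0)).card then
          alphaD A b (fun i => p ^ a i) else 0) := by
    intro a
    split_ifs
    · exact alphaD_nonneg A b _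
    · exact le_refl 0
  have hfF : ∀ a : Fin t → ℕ,
      (if 2 ≤ ((univ : Finset (Fin t)).filter (fun i => a i ≠ 0)).card then
          alphaD A b (fun i => p ^ a i) else 0) ≤ 2 / (p:ℝ)^2 * r ^ (∑ k, a k) := by
    intro a
    split_ifs with hcard
    · obtain ⟨i₀, -, hsupeq⟩ := Finset.exists_mem_eq_sup (univ : Finset (Fin t))
        Finset.univ_nonempty a
      have hi₀ : ∀ k, a k ≤ a i₀ := fun k => hsupeq ▸ Finset.le_sup (Finset.mem_univ k)
      obtain ⟨j₀, hj₀mem, hj₀ne⟩ := Finset.exists_mem_ne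
        (lt_of_lt_of_le one_lt_two hcard) i₀
      rw [Finset.mem_filter] at hj₀mem
      have haj : 1 ≤ a j₀ := Nat.one_le_iff_ne_zero.mpr hj₀mem.2
      have hAff : ¬ AffRelMod p (A i₀) (A j₀) := by
        intro hrel
        exact hexc ⟨i₀, j₀, hj₀ne.symm, hrel⟩
      obtain ⟨k, l, hkl⟩ := exists_minor hp hAff
      have hal := alphaD_le ht hp A b a hj₀ne.symm hi₀ hkl
      refine le_trans hal ?_
      set n := ∑ k, a k with hn
      set s₀ := a i₀ with hs₀
      have hnle : n ≤ t * s₀ := by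
        rw [hn]
        calc ∑ k, a k ≤ ∑ _k : Fin t, s₀ := Finset.sum_le_sum fun k _ => hi₀ k
          _ = t * s₀ := by
              rw [Finset.sum_const, Finset.card_univ, Fintype.card_fin, smul_eq_mul]
      have hs₀1 : 1 ≤ s₀ := le_trans haj (hi₀ j₀)
      have hr_ts : r ^ (t * s₀) = ((2:ℝ) ^ s₀)⁻¹ := by
        rw [hrdef, ← Real.rpow_natCast ((2:ℝ) ^ (-(t:ℝ)⁻¹)) (t * s₀),
          ← Real.rpow_mul (by norm_num)]
        rw [show (-(t:ℝ)⁻¹ * ((t * s₀ : ℕ) : ℝ)) = -(s₀:ℝ) by push_cast; field_simp]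
        rw [Real.rpow_neg (by norm_num), Real.rpow_natCast]
      have hrn : ((2:ℝ) ^ s₀)⁻¹ ≤ r ^ n := by
        rw [← hr_ts]
        exact pow_le_pow_of_le_one hr0.le hr1.le hnle
      have hps : (p:ℝ) ^ (s₀ + 1) ≤ (p:ℝ) ^ (s₀ + a j₀) :=
        pow_le_pow_right₀ (by linarith) (by omega)
      have hp21 : (2:ℝ) ^ (s₀ - 1) ≤ (p:ℝ) ^ (s₀ - 1) := pow_le_pow_left₀ (by norm_num) hp2 _
      have hkey : (p:ℝ)^2 ≤ 2 * r ^ n * (p:ℝ) ^ (s₀ + a j₀) := by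
        have e1 : (p:ℝ) ^ (s₀ + 1) = (p:ℝ)^2 * (p:ℝ)^(s₀ - 1) := by
          rw [← pow_add]
          congr 1
          omega
        have e2 : 2 * ((2:ℝ)^s₀)⁻¹ * (2:ℝ)^(s₀-1) = 1 := by
          rw [show s₀ = (s₀ - 1) + 1 by omega, pow_succ]
          have h2s : (0:ℝ) < (2:ℝ)^(s₀-1) := by positivity
          field_simp
          congr 1
        have hq0 : (0:ℝ) ≤ 2 * ((2:ℝ)^s₀)⁻¹ := by positivity
        calc (p:ℝ)^2 = (2 * ((2:ℝ)^s₀)⁻¹ * (2:ℝ)^(s₀-1)) * (p:ℝ)^2 := by rw [e2, one_mul]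
          _ ≤ (2 * ((2:ℝ)^s₀)⁻¹ * (p:ℝ)^(s₀-1)) * (p:ℝ)^2 := by
              have hpsq : (0:ℝ) ≤ (p:ℝ)^2 := by positivity
              have := mul_le_mul_of_nonneg_left hp21 hq0
              nlinarith
          _ = 2 * ((2:ℝ)^s₀)⁻¹ * ((p:ℝ)^2 * (p:ℝ)^(s₀-1)) := by ring
          _ = 2 * ((2:ℝ)^s₀)⁻¹ * (p:ℝ)^(s₀+1) := by rw [← e1]
          _ ≤ 2 * r ^ n * (p:ℝ)^(s₀+1) := by
              have hpp1 : (0:ℝ) ≤ (p:ℝ)^(s₀+1) := by positivity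
              have := mul_le_mul_of_nonneg_left hrn (le_of_lt two_pos)
              nlinarith
          _ ≤ 2 * r ^ n * (p:ℝ)^(s₀ + a j₀) := by
              have : (0:ℝ) ≤ 2 * r ^ n := by
                have := pow_nonneg hr0.le n
                linarith
              exact mul_le_mul_of_nonneg_left hps this
      have hS : (0:ℝ) < (p:ℝ) ^ (s₀ + a j₀) := pow_pos hppos _
      have hp2' : (0:ℝ) < (p:ℝ)^2 := pow_pos hppos _
      rw [inv_eq_one_div, div_le_iff₀ hS, div_mul_eq_mul_div, div_mul_eq_mul_div,
        le_div_iff₀ hp2', one_mul]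
      linarith [hkey]
    · have := pow_nonneg hr0.le (∑ k, a k)
      have h2p : (0:ℝ) ≤ 2 / (p:ℝ)^2 := by positivity
      exact mul_nonneg h2p this
  have hbound : ∀ u : Finset (Fin t → ℕ),
      (∑ a ∈ u, (if 2 ≤ ((univ : Finset (Fin t)).filter (fun i => a i ≠ 0)).card then
          alphaD A b (fun i => p ^ a i) else 0)) ≤ 2 * ((1 - r)⁻¹) ^ t / (p:ℝ)^2 := by
    intro u
    have h1 : (∑ a ∈ u, (if 2 ≤ ((univ : Finset (Fin t)).filter (fun i => a i ≠ 0)).card then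
          alphaD A b (fun i => p ^ a i) else 0)) ≤ ∑ a ∈ u, 2 / (p:ℝ)^2 * r ^ (∑ k, a k) :=
      Finset.sum_le_sum fun a _ => hfF a
    set B := (u.sup fun a => (univ : Finset (Fin t)).sup a) + 1 with hB
    have hsub : u ⊆ Fintype.piFinset fun _ : Fin t => Finset.range B := by
      intro a ha
      rw [Fintype.mem_piFinset]
      intro k
      rw [Finset.mem_range, hB]
      have hk1 : a k ≤ (univ : Finset (Fin t)).sup a := Finset.le_sup (Finset.mem_univ k)
      have hk2 : (univ : Finset (Fin t)).sup a ≤ u.sup fun a => (univ : Finset (Fin t)).sup a :=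
        Finset.le_sup ha
      omega
    have h3 : (∑ a ∈ u, r ^ (∑ k, a k)) ≤ ((1 - r)⁻¹) ^ t := by
      calc (∑ a ∈ u, r ^ (∑ k, a k))
          = ∑ a ∈ u, ∏ k, r ^ (a k) := by
            refine Finset.sum_congr rfl fun a _ => ?_
            rw [Finset.prod_pow_eq_pow_sum]
        _ ≤ ∑ a ∈ Fintype.piFinset fun _ : Fin t => Finset.range B, ∏ k, r ^ (a k) :=
            Finset.sum_le_sum_of_subset_of_nonneg hsub fun a _ _ =>
              Finset.prod_nonneg fun k _ => pow_nonneg hr0.le _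
        _ = ∏ _k : Fin t, ∑ i ∈ Finset.range B, r ^ i :=
            (Finset.prod_univ_sum _ _).symm
        _ ≤ ∏ _k : Fin t, (1 - r)⁻¹ := by
            refine Finset.prod_le_prod (fun k _ => ?_) (fun k _ => ?_)
            · exact Finset.sum_nonneg fun i _ => pow_nonneg hr0.le _
            · calc (∑ i ∈ Finset.range B, r ^ i) ≤ ∑' i : ℕ, r ^ i :=
                  Summable.sum_le_tsum _ (fun i _ => pow_nonneg hr0.le _)
                    (summable_geometric_of_lt_one hr0.le hr1)
                _ = (1 - r)⁻¹ := tsum_geometric_of_lt_one hr0.le hr1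
        _ = ((1 - r)⁻¹) ^ t := by
            rw [Finset.prod_const, Finset.card_univ, Fintype.card_fin]
    refine le_trans h1 ?_
    rw [← Finset.mul_sum]
    have hfin : 2 / (p:ℝ)^2 * (∑ a ∈ u, r ^ (∑ k, a k)) ≤ 2 / (p:ℝ)^2 * ((1 - r)⁻¹) ^ t := by
      refine mul_le_mul_of_nonneg_left h3 ?_
      positivity
    refine le_trans hfin (le_of_eq ?_)
    ring
  exact ⟨summable_of_sum_le (fun a => hf0 a) hbound,
    Summable.tsum_le_of_sum_le (summable_of_sum_le (fun a => hf0 a) hbound) hbound⟩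

end DivisorCorr
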